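/- Let η, η', η'' be nonzero vectors in ℝⁿ and ε > 0. If |η - η'| ≤ ε|η|, then |cos(η'', η) - cos(η'', η')| ≤ 2ε. -/

import Mathlib

theorem stmt_1 (n : ℕ) (η η' η'' : EuclideanSpace ℝ (Fin n))
    (hη : η ≠ 0) (hη' : η' ≠ 0) (hη'' : η'' ≠ 0) (ε : ℝ) (hε : 0 < ε)
    (h : ‖η - η'‖ ≤ ε * ‖η‖) :
    |inner ℝ η'' η / (‖η''‖ * ‖η‖) - inner ℝ η'' η' / (‖η''‖ * ‖η'‖)| ≤ 2 * ε := by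
  have ha0 : 0 < ‖η‖ := norm_pos_iff.mpr hη
  have hb0 : 0 < ‖η'‖ := norm_pos_iff.mpr hη'
  have hc0 : 0 < ‖η''‖ := norm_pos_iff.mpr hη''
  set v : EuclideanSpace ℝ (Fin n) := (‖η‖)⁻¹ • η - (‖η'‖)⁻¹ • η' with hvdef
  have hεa : ‖η - η'‖ / ‖η‖ ≤ ε := by
    rw [div_le_iff₀ ha0]; linarith
  have hv : ‖v‖ ≤ 2 * ε := by
    have h1 : v = (‖η‖)⁻¹ • (η - η') + ((‖η‖)⁻¹ - (‖η'‖)⁻¹) • η' := by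
      rw [hvdef, smul_sub, sub_smul]; abel
    have h2 : |(‖η‖)⁻¹ - (‖η'‖)⁻¹| * ‖η'‖ = |‖η'‖ - ‖η‖| / ‖η‖ := by
      rw [show (‖η‖)⁻¹ - (‖η'‖)⁻¹ = (‖η'‖ - ‖η‖) / (‖η‖ * ‖η'‖) by
        field_simp, abs_div, abs_of_pos (mul_pos ha0 hb0)]
      field_simp
    have h3 : |‖η'‖ - ‖η‖| ≤ ‖η - η'‖ := by
      rw [← norm_neg (η - η'), neg_sub]
      exact abs_norm_sub_norm_le η' η
    calc ‖v‖ ≤ ‖(‖η‖)⁻¹ • (η - η')‖ + ‖((‖η‖)⁻¹ - (‖η'‖)⁻¹) • η'‖ := by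
          rw [h1]; exact norm_add_le _ _
      _ = (‖η‖)⁻¹ * ‖η - η'‖ + |(‖η‖)⁻¹ - (‖η'‖)⁻¹| * ‖η'‖ := by
          rw [norm_smul, norm_smul, Real.norm_eq_abs, Real.norm_eq_abs,
            abs_of_pos (inv_pos.mpr ha0)]
      _ ≤ ε + ε := by
          have e1 : (‖η‖)⁻¹ * ‖η - η'‖ ≤ ε := by
            rw [inv_mul_eq_div]; exact hεa
          have e2 : |(‖η‖)⁻¹ - (‖η'‖)⁻¹| * ‖η'‖ ≤ ε := by
            rw [h2]
            exact le_trans ((div_le_div_iff_of_pos_right ha0).mpr h3) hεa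
          linarith
      _ = 2 * ε := by ring
  have key : (inner ℝ η'' η : ℝ) / (‖η''‖ * ‖η‖) - inner ℝ η'' η' / (‖η''‖ * ‖η'‖)
      = (inner ℝ η'' v : ℝ) / ‖η''‖ := by
    rw [hvdef, inner_sub_right, real_inner_smul_right, real_inner_smul_right]
    field_simp
  rw [key, abs_div, abs_of_pos hc0, div_le_iff₀ hc0]
  calc |(inner ℝ η'' v : ℝ)| ≤ ‖η''‖ * ‖v‖ := abs_real_inner_le_norm η'' v
    _ ≤ ‖η''‖ * (2 * ε) := by
        exact mul_le_mul_of_nonneg_left hv (le_of_lt hc0)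
    _ = 2 * ε * ‖η''‖ := by ring
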